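/- For m ≥ 2 and k ≥ 1, let G be the vertex-disjoint union of k copies of the graph B_m, where B_m is the bipartite graph with parts X = {1,…,m} and Y = {1,…,2m} in which, for x ≤ m−1, x is adjacent to y iff y = x or y = m−1+x, and the vertex x = m is adjacent to y iff m ≤ y ≤ 2m−2. Then G is bipartite with parts of sizes km and 2km, im(G) = k(m − 1), and mis(G) = (2^m − 1)^k. (In particular, with m = 1/ε and k = εn this shows the 2^{−O(1/ε)} dependence of δ on ε in the unbalanced bipartite stability theorem is best possible up to the implied constant.) -/

import Mathlib

/-- A set of vertices is independent in `G` if it spans no edge. -/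
def IsIndepSet {V : Type*} (G : SimpleGraph V) (s : Set V) : Prop :=
  ∀ ⦃x⦄, x ∈ s → ∀ ⦃y⦄, y ∈ s → ¬ G.Adj x y

/-- A maximal independent set. -/
def IsMaxIndepSet {V : Type*} (G : SimpleGraph V) (s : Set V) : Prop :=
  IsIndepSet G s ∧ ∀ t, IsIndepSet G t → s ⊆ t → s = t

/-- `mis G` is the number of maximal independent sets of `G`. -/
noncomputable def mis {V : Type*} (G : SimpleGraph V) : ℕ :=
  Nat.card {s : Set V // IsMaxIndepSet G s}

/-- `S` induces a triangle matching: within `S`, every vertex has exactly two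
neighbours, and these two neighbours are adjacent; so `G[S]` is a vertex-disjoint
union of triangles. -/
def IsInducedTriangleMatching {V : Type*} (G : SimpleGraph V) (S : Finset V) : Prop :=
  ∀ x ∈ S, ∃ y ∈ S, ∃ z ∈ S, G.Adj x y ∧ G.Adj x z ∧ G.Adj y z ∧
    ∀ w ∈ S, G.Adj x w → w = y ∨ w = z

/-- `itm G`: the largest number of triangles in an induced triangle matching. -/
noncomputable def itm {V : Type*} (G : SimpleGraph V) : ℕ :=
  sSup {k | ∃ S : Finset V, S.card = 3 * k ∧ IsInducedTriangleMatching G S}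

/-- `S` induces a matching: within `S`, every vertex has exactly one neighbour. -/
def IsInducedMatching {V : Type*} (G : SimpleGraph V) (S : Finset V) : Prop :=
  ∀ x ∈ S, ∃ y ∈ S, G.Adj x y ∧ ∀ z ∈ S, G.Adj x z → z = y

/-- `im G`: the largest number of edges in an induced matching. -/
noncomputable def im {V : Type*} (G : SimpleGraph V) : ℕ :=
  sSup {k | ∃ S : Finset V, S.card = 2 * k ∧ IsInducedMatching G S}

/-- The neighbourhood of a set of vertices. -/
def nbhd {V : Type*} (G : SimpleGraph V) (S : Set V) : Set V :=
  {y | ∃ x ∈ S, G.Adj x y}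

/-- A set `J` is irredundant if no member's neighbourhood is covered by the
neighbourhoods of the other members. -/
def Irredundant {V : Type*} (G : SimpleGraph V) (J : Set V) : Prop :=
  ∀ x ∈ J, ¬ (G.neighborSet x ⊆ nbhd G (J \ {x}))

/-- `irr G X`: the number of irredundant subsets of `X`. -/
noncomputable def irr {V : Type*} (G : SimpleGraph V) (X : Set V) : ℕ :=
  Nat.card {J : Set V // J ⊆ X ∧ Irredundant G J}

/-- The graph `Bgraph m` on `X = Fin m` and `Y = Fin (2*m)` (0-indexed version of the
paper's 1-indexed construction). -/
def Bgraph (m : ℕ) : SimpleGraph (Fin m ⊕ Fin (2 * m)) :=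
  SimpleGraph.fromRel (fun a b =>
    match a, b with
    | Sum.inl x, Sum.inr y =>
        (x.val < m - 1 ∧ (y.val = x.val ∨ y.val = m - 1 + x.val)) ∨
        (x.val = m - 1 ∧ m - 1 ≤ y.val ∧ y.val ≤ 2 * m - 3)
    | _, _ => False)

/-- The vertex-disjoint union of `k` copies of `Bgraph m`. -/
def kBgraph (k m : ℕ) : SimpleGraph (Fin k × (Fin m ⊕ Fin (2 * m))) where
  Adj a b := a.1 = b.1 ∧ (Bgraph m).Adj a.2 b.2
  symm := ⟨fun a b h => ⟨h.1.symm, h.2.symm⟩⟩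
  loopless := ⟨fun a h => (Bgraph m).irrefl h.2⟩


section Aux





def Bcond (m : ℕ) (x : Fin m) (y : Fin (2*m)) : Prop :=
  (x.val < m - 1 ∧ (y.val = x.val ∨ y.val = m - 1 + x.val)) ∨
  (x.val = m - 1 ∧ m - 1 ≤ y.val ∧ y.val ≤ 2 * m - 3)

lemma adj_inl_inr {m : ℕ} (x : Fin m) (y : Fin (2*m)) :
    (Bgraph m).Adj (Sum.inl x) (Sum.inr y) ↔ Bcond m x y := by
  simp [Bgraph, SimpleGraph.fromRel_adj, Bcond]

lemma adj_inr_inl {m : ℕ} (x : Fin m) (y : Fin (2*m)) :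
    (Bgraph m).Adj (Sum.inr y) (Sum.inl x) ↔ Bcond m x y := by
  simp [Bgraph, SimpleGraph.fromRel_adj, Bcond]

lemma not_adj_inl_inl {m : ℕ} (x x' : Fin m) :
    ¬ (Bgraph m).Adj (Sum.inl x) (Sum.inl x') := by
  simp [Bgraph, SimpleGraph.fromRel_adj]

lemma not_adj_inr_inr {m : ℕ} (y y' : Fin (2*m)) :
    ¬ (Bgraph m).Adj (Sum.inr y) (Sum.inr y') := by
  simp [Bgraph, SimpleGraph.fromRel_adj]

lemma isMaxIndepSet_iff {V : Type*} (G : SimpleGraph V) (s : Set V) :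
    IsMaxIndepSet G s ↔ IsIndepSet G s ∧ ∀ v ∉ s, ∃ u ∈ s, G.Adj u v := by
  constructor
  · rintro ⟨hi, hmax⟩
    refine ⟨hi, fun v hv => ?_⟩
    by_contra h
    push_neg at h
    have hind : IsIndepSet G (insert v s) := by
      intro x hx y hy hadj
      rcases Set.mem_insert_iff.1 hx with rfl | hx'
      · rcases Set.mem_insert_iff.1 hy with rfl | hy'
        · exact G.irrefl hadj
        · exact h y hy' hadj.symm
      · rcases Set.mem_insert_iff.1 hy with rfl | hy'
        · exact h x hx' hadj
        · exact hi hx' hy' hadj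
    have := hmax _ hind (Set.subset_insert v s)
    exact hv (this ▸ Set.mem_insert v s)
  · rintro ⟨hi, hdom⟩
    refine ⟨hi, fun t ht hst => Set.Subset.antisymm hst fun v hv => ?_⟩
    by_contra hvs
    obtain ⟨u, hu, hadj⟩ := hdom v hvs
    exact ht (hst hu) hv hadj

variable {m : ℕ}

def lastv (m : ℕ) (hm : 2 ≤ m) : Fin m := ⟨m - 1, by omega⟩

def SA (m : ℕ) (A : Set (Fin m)) : Set (Fin m ⊕ Fin (2*m)) :=
  fun v => match v with
  | Sum.inl x => x ∈ A
  | Sum.inr y => ∀ x ∈ A, ¬ Bcond m x y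

lemma mem_SA_inl {A : Set (Fin m)} {x : Fin m} : Sum.inl x ∈ SA m A ↔ x ∈ A := Iff.rfl
lemma mem_SA_inr {A : Set (Fin m)} {y : Fin (2*m)} :
    Sum.inr y ∈ SA m A ↔ ∀ x ∈ A, ¬ Bcond m x y := Iff.rfl

lemma SA_indep (A : Set (Fin m)) : IsIndepSet (Bgraph m) (SA m A) := by
  intro v hv w hw hadj
  match v, w with
  | Sum.inl x, Sum.inl x' => exact not_adj_inl_inl x x' hadj
  | Sum.inr y, Sum.inr y' => exact not_adj_inr_inr y y' hadj
  | Sum.inl x, Sum.inr y => exact hw x hv ((adj_inl_inr x y).1 hadj)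
  | Sum.inr y, Sum.inl x => exact hv x hw ((adj_inr_inl x y).1 hadj)

lemma SA_max (hm : 2 ≤ m) (A : Set (Fin m)) (hA : A ≠ Set.univ \ {lastv m hm}) :
    IsMaxIndepSet (Bgraph m) (SA m A) := by
  rw [isMaxIndepSet_iff]
  refine ⟨SA_indep A, fun v hv => ?_⟩
  match v with
  | Sum.inr y =>
    rw [mem_SA_inr] at hv
    push_neg at hv
    obtain ⟨x, hxA, hc⟩ := hv
    exact ⟨Sum.inl x, hxA, (adj_inl_inr x y).2 hc⟩
  | Sum.inl x =>
    rw [mem_SA_inl] at hv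
    by_cases hx : x.val < m - 1
    · obtain ⟨y, hyv⟩ : ∃ y : Fin (2*m), y.val = x.val := ⟨⟨x.val, by omega⟩, rfl⟩
      refine ⟨Sum.inr y, ?_, ?_⟩
      · rw [mem_SA_inr]
        rintro x' hx' (⟨h1, h2 | h2⟩ | ⟨h1, h2, h3⟩)
        · exact hv (by rwa [show x' = x from Fin.ext (by omega)] at hx')
        · omega
        · omega
      · exact (adj_inr_inl ..).symm.mp (Or.inl ⟨hx, Or.inl (by omega)⟩)
    · -- x = lastv
      have hxl : x = lastv m hm := Fin.ext (by have := x.isLt; simp [lastv]; omega)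
      subst hxl
      -- A ≠ univ \ {last}, last ∉ A, so ∃ i ∉ A, i ≠ last
      have : ∃ i : Fin m, i ∉ A ∧ i.val < m - 1 := by
        by_contra h
        push_neg at h
        apply hA
        ext i
        simp only [Set.mem_diff, Set.mem_univ, Set.mem_singleton_iff, true_and]
        constructor
        · intro hiA
          rintro rfl
          exact hv hiA
        · intro hne
          by_contra hiA
          have := h i hiA
          have hi2 := i.isLt
          exact hne (Fin.ext (by simp [lastv]; omega))
      obtain ⟨i, hiA, hilt⟩ := this
      obtain ⟨y, hyv⟩ : ∃ y : Fin (2*m), y.val = m - 1 + i.val := ⟨⟨m - 1 + i.val, by omega⟩, rfl⟩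
      refine ⟨Sum.inr y, ?_, ?_⟩
      · rw [mem_SA_inr]
        rintro x' hx' (⟨h1, h2 | h2⟩ | ⟨h1, h2, h3⟩)
        · omega
        · exact hiA (by rwa [show x' = i from Fin.ext (by omega)] at hx')
        · exact hv (by rwa [show x' = lastv m hm from Fin.ext (by simp only [lastv]; omega)] at hx')
      · exact (adj_inr_inl ..).symm.mp (Or.inr ⟨by simp [lastv], by omega, by omega⟩)

lemma MIS_eq_SA (hm : 2 ≤ m) {s : Set (Fin m ⊕ Fin (2*m))}
    (hs : IsMaxIndepSet (Bgraph m) s) :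
    s = SA m {x | Sum.inl x ∈ s} ∧ {x | Sum.inl x ∈ s} ≠ Set.univ \ {lastv m hm} := by
  rw [isMaxIndepSet_iff] at hs
  obtain ⟨hind, hdom⟩ := hs
  have hmain : s = SA m {x | Sum.inl x ∈ s} := by
    ext v
    match v with
    | Sum.inl x => simp [mem_SA_inl]
    | Sum.inr y =>
      rw [mem_SA_inr]
      constructor
      · intro hy x hx hc
        exact hind hx hy ((adj_inl_inr x y).2 hc)
      · intro hy
        by_contra hys
        obtain ⟨u, hu, hadj⟩ := hdom _ hys
        match u with
        | Sum.inl x => exact hy x hu ((adj_inl_inr x y).1 hadj)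
        | Sum.inr y' => exact not_adj_inr_inr y' y hadj
  refine ⟨hmain, fun hAeq => ?_⟩
  have hlast : Sum.inl (lastv m hm) ∉ s := by
    intro h
    have : lastv m hm ∈ ({x | Sum.inl x ∈ s} : Set (Fin m)) := h
    rw [hAeq] at this
    exact this.2 rfl
  obtain ⟨u, hu, hadj⟩ := hdom _ hlast
  match u with
  | Sum.inl x' => exact not_adj_inl_inl x' _ hadj
  | Sum.inr y =>
    have hc := (adj_inr_inl ..).mp hadj
    have hy : m - 1 ≤ y.val ∧ y.val ≤ 2*m - 3 := by
      rcases hc with ⟨h1, _⟩ | ⟨_, h2, h3⟩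
      · simp only [lastv] at h1; omega
      · exact ⟨h2, h3⟩
    -- the vertex i := y - (m-1) is in A = univ \ {last}, adjacent to y, contradiction
    obtain ⟨i, hiv⟩ : ∃ i : Fin m, i.val = y.val - (m - 1) := ⟨⟨y.val - (m - 1), by omega⟩, rfl⟩
    have hiA : Sum.inl i ∈ s := by
      have : i ∈ (Set.univ \ {lastv m hm} : Set (Fin m)) := by
        refine ⟨trivial, ?_⟩
        simp only [Set.mem_singleton_iff]
        intro h
        have h2 := congrArg Fin.val h
        simp only [lastv] at h2
        omega
      rw [← hAeq] at this
      exact this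
    exact hind hiA hu ((adj_inl_inr i y).2 (Or.inl ⟨by omega, Or.inr (by omega)⟩))

noncomputable def misEquiv (hm : 2 ≤ m) :
    {s : Set (Fin m ⊕ Fin (2*m)) // IsMaxIndepSet (Bgraph m) s} ≃
      {A : Set (Fin m) // A ≠ Set.univ \ {lastv m hm}} where
  toFun s := ⟨{x | Sum.inl x ∈ s.1}, (MIS_eq_SA hm s.2).2⟩
  invFun A := ⟨SA m A.1, SA_max hm A.1 A.2⟩
  left_inv s := Subtype.ext (MIS_eq_SA hm s.2).1.symm
  right_inv A := Subtype.ext (by ext x; simp [mem_SA_inl])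

lemma mis_Bgraph (hm : 2 ≤ m) : mis (Bgraph m) = 2 ^ m - 1 := by
  rw [mis, Nat.card_congr (misEquiv hm)]
  classical
  have h1 : Nat.card (Set (Fin m)) = 2 ^ m := by
    rw [show (Set (Fin m)) = (Fin m → Prop) from rfl,
      Nat.card_congr (Equiv.arrowCongr (Equiv.refl (Fin m)) Equiv.propEquivBool),
      Nat.card_fun]
    simp
  rw [Nat.card_eq_fintype_card, Fintype.card_subtype_compl, Fintype.card_subtype_eq]
  rw [← Nat.card_eq_fintype_card, h1]


variable {k : ℕ}

def sliceSet (s : Set (Fin k × (Fin m ⊕ Fin (2*m)))) (i : Fin k) :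
    Set (Fin m ⊕ Fin (2*m)) := {w | (i, w) ∈ s}

lemma slice_MIS {s : Set (Fin k × (Fin m ⊕ Fin (2*m)))}
    (hs : IsMaxIndepSet (kBgraph k m) s) (i : Fin k) :
    IsMaxIndepSet (Bgraph m) (sliceSet s i) := by
  rw [isMaxIndepSet_iff] at hs ⊢
  obtain ⟨hind, hdom⟩ := hs
  constructor
  · intro w hw w' hw' hadj
    exact hind hw hw' ⟨rfl, hadj⟩
  · intro w hw
    obtain ⟨⟨j, u⟩, hu, hadj⟩ := hdom (i, w) hw
    obtain ⟨h1, h2⟩ := hadj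
    cases h1
    exact ⟨u, hu, h2⟩

lemma glue_MIS {f : Fin k → Set (Fin m ⊕ Fin (2*m))}
    (hf : ∀ i, IsMaxIndepSet (Bgraph m) (f i)) :
    IsMaxIndepSet (kBgraph k m) {v | v.2 ∈ f v.1} := by
  rw [isMaxIndepSet_iff]
  constructor
  · rintro ⟨i, w⟩ hw ⟨j, w'⟩ hw' ⟨h1, h2⟩
    cases h1
    exact ((isMaxIndepSet_iff _ _).1 (hf i)).1 hw hw' h2
  · rintro ⟨i, w⟩ hw
    obtain ⟨u, hu, hadj⟩ := ((isMaxIndepSet_iff _ _).1 (hf i)).2 w hw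
    exact ⟨(i, u), hu, rfl, hadj⟩

noncomputable def kMisEquiv (k m : ℕ) :
    {s : Set (Fin k × (Fin m ⊕ Fin (2*m))) // IsMaxIndepSet (kBgraph k m) s} ≃
      (Fin k → {t : Set (Fin m ⊕ Fin (2*m)) // IsMaxIndepSet (Bgraph m) t}) where
  toFun s := fun i => ⟨sliceSet s.1 i, slice_MIS s.2 i⟩
  invFun f := ⟨{v | v.2 ∈ (f v.1).1}, glue_MIS (fun i => (f i).2)⟩
  left_inv s := Subtype.ext (by ext ⟨i, w⟩; rfl)
  right_inv f := by funext i; exact Subtype.ext (by ext w; rfl)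

lemma mis_kBgraph (hm : 2 ≤ m) : mis (kBgraph k m) = (2 ^ m - 1) ^ k := by
  rw [mis, Nat.card_congr (kMisEquiv k m), Nat.card_fun, ← mis, mis_Bgraph hm]
  simp



lemma B_im_ub (hm : 2 ≤ m) (T : Finset (Fin m ⊕ Fin (2*m)))
    (hT : IsInducedMatching (Bgraph m) T) : T.card ≤ 2 * (m - 1) := by
  classical
  set TX : Finset (Fin m) := Finset.univ.filter (fun x => Sum.inl x ∈ T) with hTX
  set TY : Finset (Fin (2*m)) := Finset.univ.filter (fun y => Sum.inr y ∈ T) with hTY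
  have hsplit : T.card = TX.card + TY.card := by
    have : T = (TX.map ⟨Sum.inl, Sum.inl_injective⟩) ∪ (TY.map ⟨Sum.inr, Sum.inr_injective⟩) := by
      ext v
      match v with
      | Sum.inl x => simp [hTX, hTY]
      | Sum.inr y => simp [hTX, hTY]
    rw [this, Finset.card_union_of_disjoint, Finset.card_map, Finset.card_map]
    simp [Finset.disjoint_left]
  have hYX : TY.card ≤ TX.card := by
    apply Finset.card_le_card_of_injOn
      (fun y => if h : ∃ x, Sum.inl x ∈ T ∧ (Bgraph m).Adj (Sum.inl x) (Sum.inr y)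
        then h.choose else ⟨0, by omega⟩)
    · intro y hy
      rw [hTY, Finset.mem_coe, Finset.mem_filter] at hy
      obtain ⟨p, hp, hadj, _⟩ := hT _ hy.2
      have hex : ∃ x, Sum.inl x ∈ T ∧ (Bgraph m).Adj (Sum.inl x) (Sum.inr y) := by
        match p with
        | Sum.inl x => exact ⟨x, hp, hadj.symm⟩
        | Sum.inr y' => exact absurd hadj (not_adj_inr_inr _ _)
      beta_reduce
      rw [dif_pos hex, hTX, Finset.mem_coe, Finset.mem_filter]
      exact ⟨Finset.mem_univ _, hex.choose_spec.1⟩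
    · intro y1 hy1 y2 hy2 heq
      simp only [hTY, Finset.coe_filter, Set.mem_setOf_eq, Finset.mem_univ, true_and] at hy1 hy2
      simp only at heq
      have hex : ∀ y : Fin (2*m), Sum.inr y ∈ T →
          ∃ x, Sum.inl x ∈ T ∧ (Bgraph m).Adj (Sum.inl x) (Sum.inr y) := by
        intro y hy
        obtain ⟨p, hp, hadj, _⟩ := hT _ hy
        match p with
        | Sum.inl x => exact ⟨x, hp, hadj.symm⟩
        | Sum.inr y' => exact absurd hadj (not_adj_inr_inr _ _)
      have h1 := hex y1 hy1
      have h2 := hex y2 hy2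
      rw [dif_pos h1, dif_pos h2] at heq
      obtain ⟨hx1T, hx1adj⟩ := h1.choose_spec
      obtain ⟨hx2T, hx2adj⟩ := h2.choose_spec
      rw [heq] at hx1adj
      -- x := h2.choose has two inr-neighbours y1, y2 in T, so they coincide
      obtain ⟨q, hq, hqadj, huniq⟩ := hT _ hx2T
      have e1 := huniq _ hy1 hx1adj
      have e2 := huniq _ hy2 hx2adj
      rw [← e2] at e1
      exact Sum.inr_injective e1
  have hXm : TX.card ≤ m - 1 := by
    have hne : TX ≠ Finset.univ := by
      intro hu
      have hall : ∀ x : Fin m, Sum.inl x ∈ T := by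
        intro x
        have : x ∈ TX := hu ▸ Finset.mem_univ x
        rw [hTX, Finset.mem_filter] at this
        exact this.2
      obtain ⟨q, hq, hqadj, _⟩ := hT _ (hall ⟨m - 1, by omega⟩)
      match q with
      | Sum.inl x' => exact absurd hqadj (not_adj_inl_inl _ _)
      | Sum.inr y =>
        have hc := (adj_inl_inr ..).mp hqadj
        have hy : m - 1 ≤ y.val ∧ y.val ≤ 2*m - 3 := by
          rcases hc with ⟨h1, _⟩ | ⟨_, h2, h3⟩
          · simp only [Fin.val_mk] at h1; omega
          · exact ⟨h2, h3⟩
        obtain ⟨i, hiv⟩ : ∃ i : Fin m, i.val = y.val - (m - 1) :=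
          ⟨⟨y.val - (m - 1), by omega⟩, rfl⟩
        have hiadj : (Bgraph m).Adj (Sum.inl i) (Sum.inr y) :=
          (adj_inl_inr ..).2 (Or.inl ⟨by omega, Or.inr (by omega)⟩)
        obtain ⟨p, hp, hpadj, huniq⟩ := hT _ hq
        have e1 := huniq _ (hall i) hiadj.symm
        have e2 := huniq _ (hall ⟨m - 1, by omega⟩) hqadj.symm
        rw [← e2] at e1
        have := Sum.inl_injective e1
        have := congrArg Fin.val this
        simp only [Fin.val_mk] at this
        omega
    have : TX ⊂ Finset.univ := Finset.ssubset_univ_iff.2 hne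
    have := Finset.card_lt_card this
    simp only [Finset.card_univ, Fintype.card_fin] at this
    omega
  omega

lemma kB_im_ub (hm : 2 ≤ m) (S : Finset (Fin k × (Fin m ⊕ Fin (2*m))))
    (hS : IsInducedMatching (kBgraph k m) S) : S.card ≤ 2 * (k * (m - 1)) := by
  classical
  rw [Finset.card_eq_sum_card_fiberwise (f := Prod.fst) (t := Finset.univ)
    (fun x _ => Finset.mem_univ _)]
  have hfib : ∀ i : Fin k, (S.filter (fun v => v.1 = i)).card ≤ 2 * (m - 1) := by
    intro i
    set Ti : Finset (Fin m ⊕ Fin (2*m)) := (S.filter (fun v => v.1 = i)).image Prod.snd with hTi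
    have hmemTi : ∀ w, w ∈ Ti ↔ (i, w) ∈ S := by
      intro w
      rw [hTi, Finset.mem_image]
      constructor
      · rintro ⟨⟨j, w'⟩, hv, rfl⟩
        rw [Finset.mem_filter] at hv
        obtain ⟨hvS, rfl⟩ := hv
        exact hvS
      · intro h
        exact ⟨(i, w), Finset.mem_filter.2 ⟨h, rfl⟩, rfl⟩
    have hcard : (S.filter (fun v => v.1 = i)).card = Ti.card := by
      rw [hTi]
      rw [Finset.card_image_of_injOn]
      intro v hv v' hv' heq
      rw [Finset.mem_coe, Finset.mem_filter] at hv hv'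
      exact Prod.ext (hv.2.trans hv'.2.symm) heq
    rw [hcard]
    apply B_im_ub hm Ti
    intro w hw
    obtain ⟨⟨p1, p2⟩, hp, hadj, huniq⟩ := hS _ ((hmemTi w).1 hw)
    obtain ⟨h1, h2⟩ := hadj
    cases h1
    refine ⟨p2, (hmemTi p2).2 hp, h2, ?_⟩
    intro z hz hzadj
    have := huniq (i, z) ((hmemTi z).1 hz) ⟨rfl, hzadj⟩
    exact congrArg Prod.snd this
  calc ∑ i : Fin k, (S.filter (fun v => v.1 = i)).card
      ≤ ∑ _i : Fin k, 2 * (m - 1) := Finset.sum_le_sum (fun i _ => hfib i)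
    _ = 2 * (k * (m - 1)) := by simp [Finset.sum_const]; ring


def embv (m : ℕ) (j : Fin (m-1)) (b : Bool) : Fin m ⊕ Fin (2*m) :=
  if b then Sum.inl ⟨j.val, by have := j.isLt; omega⟩
  else Sum.inr ⟨j.val, by have := j.isLt; omega⟩

lemma embv_val_lt {j : Fin (m-1)} : (embv m j true).elim Fin.val Fin.val = j.val := rfl

def imEmb (k m : ℕ) : Fin k × Fin (m - 1) × Bool ↪ Fin k × (Fin m ⊕ Fin (2*m)) where
  toFun := fun p => (p.1, embv m p.2.1 p.2.2)
  inj' := by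
    rintro ⟨i, j, b⟩ ⟨i', j', b'⟩ heq
    simp only [Prod.mk.injEq] at heq
    obtain ⟨h1, h2⟩ := heq
    subst h1
    simp only [Prod.mk.injEq, true_and]
    cases b <;> cases b' <;> simp only [embv, if_true, if_false] at h2
    · have := congrArg Fin.val (Sum.inr_injective h2)
      simp only [Fin.val_mk] at this
      exact ⟨Fin.ext this, rfl⟩
    · exact absurd h2 (by simp)
    · exact absurd h2 (by simp)
    · have := congrArg Fin.val (Sum.inl_injective h2)
      simp only [Fin.val_mk] at this
      exact ⟨Fin.ext this, rfl⟩

lemma im_kBgraph (hm : 2 ≤ m) (hk : 1 ≤ k) : im (kBgraph k m) = k * (m - 1) := by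
  classical
  set SS : Finset (Fin k × (Fin m ⊕ Fin (2*m))) := Finset.univ.map (imEmb k m) with hSS
  have hcard : SS.card = 2 * (k * (m - 1)) := by
    rw [hSS, Finset.card_map, Finset.card_univ]
    simp only [Fintype.card_prod, Fintype.card_fin, Fintype.card_bool]
    ring
  have hmemSS : ∀ v, v ∈ SS ↔ ∃ (i : Fin k) (j : Fin (m-1)) (b : Bool),
      v = (i, embv m j b) := by
    intro v
    rw [hSS, Finset.mem_map]
    constructor
    · rintro ⟨⟨i, j, b⟩, _, rfl⟩
      exact ⟨i, j, b, rfl⟩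
    · rintro ⟨i, j, b, rfl⟩
      exact ⟨(i, j, b), Finset.mem_univ _, rfl⟩
  have hmatch : IsInducedMatching (kBgraph k m) SS := by
    rintro v hv
    obtain ⟨i, j, b, rfl⟩ := (hmemSS v).1 hv
    have hj := j.isLt
    cases b
    · -- inr case; partner is inl
      refine ⟨(i, embv m j true), (hmemSS _).2 ⟨i, j, true, rfl⟩,
        ⟨rfl, ?_⟩, ?_⟩
      · show (Bgraph m).Adj (Sum.inr ⟨j.val, _⟩) (Sum.inl ⟨j.val, _⟩)
        exact (adj_inr_inl ..).2 (Or.inl ⟨by show j.val < m - 1; omega, Or.inl rfl⟩)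
      · rintro ⟨i', w⟩ hz ⟨h1, h2⟩
        cases h1
        obtain ⟨i2, j2, b2, heq⟩ := (hmemSS _).1 hz
        simp only [Prod.mk.injEq] at heq
        obtain ⟨rfl, rfl⟩ := heq
        have hj2 := j2.isLt
        cases b2
        · exact absurd h2 (not_adj_inr_inr _ _)
        · have hc := (adj_inr_inl ..).1 h2
          simp only [Prod.mk.injEq, true_and]
          rcases hc with ⟨h3, h4 | h4⟩ | ⟨h3, h4, h5⟩
          · simp only [Fin.val_mk] at h3 h4
            have : j2 = j := Fin.ext (by omega)
            rw [this]
          · simp only [Fin.val_mk] at h4; omega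
          · simp only [Fin.val_mk] at h3; omega
    · -- inl case; partner is inr
      refine ⟨(i, embv m j false), (hmemSS _).2 ⟨i, j, false, rfl⟩,
        ⟨rfl, ?_⟩, ?_⟩
      · show (Bgraph m).Adj (Sum.inl ⟨j.val, _⟩) (Sum.inr ⟨j.val, _⟩)
        exact (adj_inl_inr ..).2 (Or.inl ⟨by show j.val < m - 1; omega, Or.inl rfl⟩)
      · rintro ⟨i', w⟩ hz ⟨h1, h2⟩
        cases h1
        obtain ⟨i2, j2, b2, heq⟩ := (hmemSS _).1 hz
        simp only [Prod.mk.injEq] at heq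
        obtain ⟨rfl, rfl⟩ := heq
        have hj2 := j2.isLt
        cases b2
        · have hc := (adj_inl_inr ..).1 h2
          simp only [Prod.mk.injEq, true_and]
          rcases hc with ⟨h3, h4 | h4⟩ | ⟨h3, h4, h5⟩
          · simp only [Fin.val_mk] at h3 h4
            have : j2 = j := Fin.ext (by omega)
            rw [this]
          · simp only [Fin.val_mk] at h4; omega
          · simp only [Fin.val_mk] at h3; omega
        · exact absurd h2 (not_adj_inl_inl _ _)
  have hmem : k * (m - 1) ∈ {t | ∃ S : Finset (Fin k × (Fin m ⊕ Fin (2*m))),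
      S.card = 2 * t ∧ IsInducedMatching (kBgraph k m) S} := ⟨SS, hcard, hmatch⟩
  have hub : ∀ t ∈ {t | ∃ S : Finset (Fin k × (Fin m ⊕ Fin (2*m))),
      S.card = 2 * t ∧ IsInducedMatching (kBgraph k m) S}, t ≤ k * (m - 1) := by
    rintro t ⟨S, hScard, hSmatch⟩
    have := kB_im_ub hm S hSmatch
    omega
  exact le_antisymm (csSup_le ⟨_, hmem⟩ hub) (le_csSup ⟨k * (m - 1), hub⟩ hmem)

end Aux

theorem im_mis_kBgraph (k m : ℕ) (hm : 2 ≤ m) (hk : 1 ≤ k) :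
    (Finset.univ.filter (fun v : Fin k × (Fin m ⊕ Fin (2 * m)) => v.2.isLeft = true)).card
        = k * m ∧
    (Finset.univ.filter (fun v : Fin k × (Fin m ⊕ Fin (2 * m)) => v.2.isRight = true)).card
        = 2 * (k * m) ∧
    (∀ a b : Fin k × (Fin m ⊕ Fin (2 * m)), (kBgraph k m).Adj a b →
      (a.2.isLeft = true ∧ b.2.isRight = true) ∨ (a.2.isRight = true ∧ b.2.isLeft = true)) ∧
    im (kBgraph k m) = k * (m - 1) ∧
    mis (kBgraph k m) = (2 ^ m - 1) ^ k := by
  refine ⟨?_, ?_, ?_, im_kBgraph hm hk, mis_kBgraph hm⟩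
  · rw [show (Finset.univ : Finset (Fin k × (Fin m ⊕ Fin (2*m))))
        = Finset.univ ×ˢ Finset.univ from rfl]
    rw [Finset.filter_product_right (q := fun w : Fin m ⊕ Fin (2*m) => w.isLeft = true),
      Finset.card_product]
    have : Finset.filter (fun w : Fin m ⊕ Fin (2*m) => w.isLeft = true) Finset.univ
        = Finset.univ.map ⟨Sum.inl, Sum.inl_injective⟩ := by
      ext w; cases w <;> simp
    simp [this]
  · rw [show (Finset.univ : Finset (Fin k × (Fin m ⊕ Fin (2*m))))
        = Finset.univ ×ˢ Finset.univ from rfl]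
    rw [Finset.filter_product_right (q := fun w : Fin m ⊕ Fin (2*m) => w.isRight = true),
      Finset.card_product]
    have : Finset.filter (fun w : Fin m ⊕ Fin (2*m) => w.isRight = true) Finset.univ
        = Finset.univ.map ⟨Sum.inr, Sum.inr_injective⟩ := by
      ext w; cases w <;> simp
    simp [this]
    ring
  · rintro ⟨i, w⟩ ⟨i', w'⟩ ⟨h1, h2⟩
    match w, w' with
    | Sum.inl x, Sum.inl x' => exact absurd h2 (not_adj_inl_inl _ _)
    | Sum.inr y, Sum.inr y' => exact absurd h2 (not_adj_inr_inr _ _)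
    | Sum.inl x, Sum.inr y => exact Or.inl ⟨rfl, rfl⟩
    | Sum.inr y, Sum.inl x => exact Or.inr ⟨rfl, rfl⟩
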